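/- Let d, n be positive integers, X = [x_1, ..., x_n] with x_i ∈ ℝ^d, y ∈ {-1,1}^n with y_i = -1 for some i and y_j = 1 for some j, and let β ∈ ℝ^d be fixed. Then ∫_ℝ ∏_{i=1}^n exp(-V(y_i(β₀ + x_iᵀβ))) dβ₀ ≤ 2‖X‖₁‖β‖₁ + 2e, where ‖X‖₁ is the sum of the absolute values of all entries of X and ‖β‖₁ is the l₁ norm of β. -/

import Mathlib

open MeasureTheory Set
open scoped RealInnerProductSpace

/-- The DWD loss function. -/
noncomputable def V (u : ℝ) : ℝ := if u ≤ 1/2 then 1 - u else 1/(4*u)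

lemma V_nonneg (u : ℝ) : 0 ≤ V u := by
  unfold V; split
  · linarith
  · rename_i h
    push_neg at h
    exact div_nonneg zero_le_one (by linarith)

lemma neg_le_V (u : ℝ) : -u ≤ V u := by
  unfold V; split
  · linarith
  · rename_i h
    push_neg at h
    have : (0:ℝ) < 1/(4*u) := by positivity
    linarith

lemma exp_neg_V_le_one (u : ℝ) : Real.exp (-V u) ≤ 1 := by
  rw [← Real.exp_zero]
  exact Real.exp_le_exp.mpr (by linarith [V_nonneg u])

lemma V_measurable : Measurable V := by
  unfold V
  exact Measurable.ite (measurableSet_le measurable_id measurable_const)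
    (measurable_const.sub measurable_id) (by
      have : (fun u : ℝ => 1/(4*u)) = fun u : ℝ => ((4:ℝ) * u)⁻¹ := by
        funext u; rw [one_div]
      rw [this]
      exact (measurable_id.const_mul 4).inv)

lemma integrable_exp_neg_abs : Integrable (fun t : ℝ => Real.exp (-|t|)) := by
  have h1 : IntegrableOn (fun t : ℝ => Real.exp (-|t|)) (Iic 0) :=
    (integrableOn_exp_Iic 0).congr_fun
      (fun t ht => by rw [abs_of_nonpos ht, neg_neg]) measurableSet_Iic
  have h2 : IntegrableOn (fun t : ℝ => Real.exp (-|t|)) (Ioi 0) :=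
    (exp_neg_integrableOn_Ioi 0 one_pos).congr_fun
      (fun t ht => by rw [abs_of_pos ht]; ring_nf) measurableSet_Ioi
  rw [← integrableOn_univ, ← Set.Iic_union_Ioi (a := (0:ℝ))]
  exact h1.union h2

/-- for fixed `β ∈ ℝ^d`, the integral over the intercept of the
likelihood term is bounded: `∫ ∏ᵢ exp(-V(yᵢ(β₀ + xᵢᵀβ))) dβ₀ ≤ 2‖X‖₁‖β‖₁ + 2e`,
where `‖X‖₁` is the sum of the absolute values of the entries of `X` and
`‖β‖₁` is the `l₁` norm of `β`. -/
theorem dwd_intercept_integral_bound (d n : ℕ) (hd : 0 < d) (hn : 0 < n)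
    (x : Fin n → EuclideanSpace ℝ (Fin d))
    (y : Fin n → ℝ) (hy : ∀ i, y i = -1 ∨ y i = 1)
    (hneg : ∃ i, y i = -1) (hpos : ∃ j, y j = 1)
    (β : EuclideanSpace ℝ (Fin d)) :
    (∫ β₀ : ℝ, ∏ i, Real.exp (-V (y i * (β₀ + ⟪x i, β⟫))))
      ≤ 2 * (∑ i, ∑ j, |x i j|) * (∑ j, |β j|) + 2 * Real.exp 1 := by
  set S : ℝ := ∑ i, ∑ j, |x i j| with hS
  set B : ℝ := ∑ j, |β j| with hB
  set M : ℝ := S * B with hMdef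
  have hS0 : 0 ≤ S := Finset.sum_nonneg fun _ _ => Finset.sum_nonneg fun _ _ => abs_nonneg _
  have hB0 : 0 ≤ B := Finset.sum_nonneg fun _ _ => abs_nonneg _
  have hM0 : 0 ≤ M := mul_nonneg hS0 hB0
  set a : Fin n → ℝ := fun i => ⟪x i, β⟫ with ha_def
  have ha : ∀ i, |a i| ≤ M := by
    intro i
    have h1 : a i = ∑ j, x i j * β j := by
      simp [ha_def, PiLp.inner_apply, RCLike.inner_apply, conj_trivial]
      exact Finset.sum_congr rfl fun _ _ => mul_comm _ _
    rw [h1]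
    calc |∑ j, x i j * β j| ≤ ∑ j, |x i j * β j| := Finset.abs_sum_le_sum_abs _ _
      _ = ∑ j, |x i j| * |β j| := by simp [abs_mul]
      _ ≤ ∑ j, |x i j| * B := by
          refine Finset.sum_le_sum fun j _ => mul_le_mul_of_nonneg_left ?_ (abs_nonneg _)
          rw [hB]
          exact Finset.single_le_sum (f := fun j => |β j|) (fun k _ => abs_nonneg _) (Finset.mem_univ j)
      _ = (∑ j, |x i j|) * B := (Finset.sum_mul _ _ _).symm
      _ ≤ S * B := by
          refine mul_le_mul_of_nonneg_right ?_ hB0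
          rw [hS]
          exact Finset.single_le_sum (f := fun i => ∑ j, |x i j|)
            (fun k _ => Finset.sum_nonneg fun _ _ => abs_nonneg _) (Finset.mem_univ i)
  set f : ℝ → ℝ := fun t => ∏ i, Real.exp (-V (y i * (t + a i))) with hf_def
  have hf0 : ∀ t, 0 ≤ f t := fun t => Finset.prod_nonneg fun i _ => (Real.exp_pos _).le
  have hf1 : ∀ t, f t ≤ 1 := fun t =>
    Finset.prod_le_one (fun i _ => (Real.exp_pos _).le) (fun i _ => exp_neg_V_le_one _)
  have hfi : ∀ (t : ℝ) (i0 : Fin n), f t ≤ Real.exp (-V (y i0 * (t + a i0))) := by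
    intro t i0
    calc f t = Real.exp (-V (y i0 * (t + a i0))) *
          ∏ i ∈ Finset.univ.erase i0, Real.exp (-V (y i * (t + a i))) :=
        (Finset.mul_prod_erase _ _ (Finset.mem_univ i0)).symm
      _ ≤ Real.exp (-V (y i0 * (t + a i0))) * 1 :=
        mul_le_mul_of_nonneg_left
          (Finset.prod_le_one (fun i _ => (Real.exp_pos _).le) (fun i _ => exp_neg_V_le_one _))
          (Real.exp_pos _).le
      _ = _ := mul_one _
  set g : ℝ → ℝ := fun t => min 1 (Real.exp (M - |t|)) with hg_def
  have hfg : ∀ t, f t ≤ g t := by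
    intro t
    refine le_min (hf1 t) ?_
    rcases le_total 0 t with ht | ht
    · obtain ⟨i0, hi0⟩ := hneg
      refine (hfi t i0).trans (Real.exp_le_exp.mpr ?_)
      rw [hi0]
      have h := neg_le_V (-1 * (t + a i0))
      have h2 := (abs_le.mp (ha i0)).1
      rw [abs_of_nonneg ht]
      linarith
    · obtain ⟨j0, hj0⟩ := hpos
      refine (hfi t j0).trans (Real.exp_le_exp.mpr ?_)
      rw [hj0]
      have h := neg_le_V (1 * (t + a j0))
      have h2 := (abs_le.mp (ha j0)).2
      rw [abs_of_nonpos ht]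
      linarith
  have hfmeas : Measurable f := by
    apply Finset.measurable_prod
    intro i _
    exact Real.measurable_exp.comp
      ((V_measurable.comp (((measurable_id.add_const (a i)).const_mul (y i)))).neg)
  have hgmeas : Measurable g :=
    measurable_const.min (Real.measurable_exp.comp (measurable_const.sub measurable_abs))
  have hg0 : ∀ t, 0 ≤ g t := fun t => le_min zero_le_one (Real.exp_pos _).le
  have hgle : ∀ t, g t ≤ Real.exp M * Real.exp (-|t|) := by
    intro t
    rw [← Real.exp_add]
    exact (min_le_right _ _).trans (le_of_eq (by ring_nf))
  have hgint : Integrable g := by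
    refine (integrable_exp_neg_abs.const_mul (Real.exp M)).mono'
      hgmeas.aestronglyMeasurable (ae_of_all _ fun t => ?_)
    rw [Real.norm_eq_abs, abs_of_nonneg (hg0 t)]
    exact hgle t
  have hfint : Integrable f := by
    refine hgint.mono' hfmeas.aestronglyMeasurable (ae_of_all _ fun t => ?_)
    rw [Real.norm_eq_abs, abs_of_nonneg (hf0 t)]
    exact hfg t
  have key : (∫ t, f t) ≤ ∫ t, g t := integral_mono hfint hgint hfg
  -- now compute the integral of g
  have hsplit1 : (∫ t, g t) = (∫ t in Iic (-M), g t) + ∫ t in Ioi (-M), g t :=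
    (intervalIntegral.integral_Iic_add_Ioi hgint.integrableOn hgint.integrableOn).symm
  have hsplit2 : (∫ t in Ioi (-M), g t) = (∫ t in Ioc (-M) M, g t) + ∫ t in Ioi M, g t := by
    rw [← setIntegral_union (Ioc_disjoint_Ioi le_rfl) measurableSet_Ioi
      hgint.integrableOn hgint.integrableOn, Ioc_union_Ioi_eq_Ioi (by linarith)]
  have hIic : (∫ t in Iic (-M), g t) ≤ 1 := by
    have hb : IntegrableOn (fun t : ℝ => Real.exp M * Real.exp t) (Iic (-M)) :=
      (integrableOn_exp_Iic (-M)).const_mul _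
    have h1 : (∫ t in Iic (-M), g t) ≤ ∫ t in Iic (-M), Real.exp M * Real.exp t := by
      refine setIntegral_mono_on hgint.integrableOn hb measurableSet_Iic fun t ht => ?_
      have ht' : t ≤ -M := ht
      have : g t ≤ Real.exp (M - |t|) := min_le_right _ _
      rw [← Real.exp_add]
      refine this.trans (Real.exp_le_exp.mpr ?_)
      rw [abs_of_nonpos (by linarith)]
      linarith
    rw [MeasureTheory.integral_const_mul, integral_exp_Iic] at h1
    rw [← Real.exp_add] at h1
    simpa using h1
  have hIoi : (∫ t in Ioi M, g t) ≤ 1 := by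
    have hb : IntegrableOn (fun t : ℝ => Real.exp M * Real.exp (-t)) (Ioi M) := by
      refine IntegrableOn.congr_fun
        ((exp_neg_integrableOn_Ioi M one_pos).const_mul (Real.exp M))
        (fun t ht => by norm_num) measurableSet_Ioi
    have h1 : (∫ t in Ioi M, g t) ≤ ∫ t in Ioi M, Real.exp M * Real.exp (-t) := by
      refine setIntegral_mono_on hgint.integrableOn hb measurableSet_Ioi fun t ht => ?_
      have ht' : M < t := ht
      have : g t ≤ Real.exp (M - |t|) := min_le_right _ _
      rw [← Real.exp_add]
      refine this.trans (Real.exp_le_exp.mpr ?_)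
      rw [abs_of_pos (by linarith)]
      linarith
    rw [MeasureTheory.integral_const_mul, integral_exp_neg_Ioi] at h1
    rw [← Real.exp_add] at h1
    simpa using h1
  have hIoc : (∫ t in Ioc (-M) M, g t) ≤ 2 * M := by
    have h1 : (∫ t in Ioc (-M) M, g t) ≤ ∫ _ in Ioc (-M) M, (1:ℝ) := by
      refine setIntegral_mono_on hgint.integrableOn
        ((integrableOn_const_iff).mpr (Or.inr (by rw [Real.volume_Ioc]; exact ENNReal.ofReal_lt_top)))
        measurableSet_Ioc fun t _ => min_le_left _ _
    rw [setIntegral_const, measureReal_def, Real.volume_Ioc, smul_eq_mul, mul_one] at h1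
    refine h1.trans ?_
    rw [ENNReal.toReal_ofReal (by linarith)]
    linarith
  have hg_total : (∫ t, g t) ≤ 2 * M + 2 := by
    rw [hsplit1, hsplit2]; linarith
  have he : (1:ℝ) ≤ Real.exp 1 := Real.one_le_exp zero_le_one
  calc (∫ β₀ : ℝ, ∏ i, Real.exp (-V (y i * (β₀ + ⟪x i, β⟫)))) = ∫ t, f t := rfl
    _ ≤ ∫ t, g t := key
    _ ≤ 2 * M + 2 := hg_total
    _ ≤ 2 * S * B + 2 * Real.exp 1 := by rw [hMdef]; nlinarith
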